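/- Let N = ℤ^{2n+3} with standard basis e_{x1}, e_{x2}, e_w, e_{y1},...,e_{yn}, e_{z1},...,e_{zn}, and let m, n ≥ 1. Let L be the subgroup generated by: e_{x1}+e_{x2}+e_{zn}; e_w; e_{yi} for 1 ≤ i ≤ n; e_{zi} for 1 ≤ i ≤ n−1; e_{x1} + Σ_{i=1}^n e_{yi}; and e_{x1} + e_{x2} + m·e_w + Σ_{i=1}^n (mi+1)(e_{yi}+e_{zi}). Then the index [N : L] equals mn. -/
import Mathlib


/-- The ambient lattice `N = ℤ^{2n+3}`, with coordinates
`x₁, x₂, w, y₁, …, yₙ, z₁, …, zₙ`, modelled as `ℤ × ℤ × ℤ × (Fin n → ℤ) × (Fin n → ℤ)`. -/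
abbrev LatticeV (n : ℕ) : Type := ℤ × ℤ × ℤ × (Fin n → ℤ) × (Fin n → ℤ)

/-- The unit vector `e_{x₁}`. -/
def ex1 (n : ℕ) : LatticeV n := (1, 0, 0, 0, 0)
/-- The unit vector `e_{x₂}`. -/
def ex2 (n : ℕ) : LatticeV n := (0, 1, 0, 0, 0)
/-- The unit vector `e_w`. -/
def ew (n : ℕ) : LatticeV n := (0, 0, 1, 0, 0)
/-- The unit vector `e_{yᵢ}` (here `i : Fin n` corresponds to the index `i+1`). -/
def ey (n : ℕ) (i : Fin n) : LatticeV n := (0, 0, 0, Pi.single i 1, 0)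
/-- The unit vector `e_{zᵢ}` (here `i : Fin n` corresponds to the index `i+1`). -/
def ez (n : ℕ) (i : Fin n) : LatticeV n := (0, 0, 0, 0, Pi.single i 1)

/-- `v₂ = e_{x₁} + ∑_{i=1}^n e_{yᵢ}`. -/
def v2 (n : ℕ) : LatticeV n := ex1 n + ∑ i : Fin n, ey n i

/-- `v_nlin = e_{x₁} + e_{x₂} + m·e_w + ∑_{i=1}^n (mi+1)·(e_{yᵢ} + e_{zᵢ})`. -/
def vnlin (m n : ℕ) : LatticeV n :=
  ex1 n + ex2 n + (m : ℤ) • ew n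
    + ∑ i : Fin n, ((m : ℤ) * ((i : ℕ) + 1) + 1) • (ey n i + ez n i)

lemma sum_single_apply (n : ℕ) (c : Fin n → ℤ) (j : Fin n) :
    ∑ i : Fin n, c i * (Pi.single i 1 : Fin n → ℤ) j = c j := by
  rw [Finset.sum_eq_single j]
  · simp
  · intro i _ hij
    simp [Pi.single_apply, (Ne.symm hij : ¬ j = i)]
  · simp

/-- Decomposition of an arbitrary vector along the generators and the
distinguished last `z`-coordinate. -/
lemma reprV (n : ℕ) (hn : 1 ≤ n) (v : LatticeV n) :
    v = v.1 • ex1 n + v.2.1 • (ex2 n + ez n ⟨n-1, by omega⟩) + v.2.2.1 • ew n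
      + (∑ i : Fin n, (v.2.2.2.1 i) • ey n i)
      + (∑ i : Fin n, (if (i:ℕ)+1 < n then v.2.2.2.2 i else (0:ℤ)) • ez n i)
      + (v.2.2.2.2 ⟨n-1, by omega⟩ - v.2.1) • ez n ⟨n-1, by omega⟩ := by
  obtain ⟨a, b, c, y, z⟩ := v
  refine Prod.ext ?_ (Prod.ext ?_ (Prod.ext ?_ (Prod.ext ?_ ?_)))
  · simp [ex1, ex2, ew, ey, ez, Prod.fst_sum, Prod.snd_sum, -ite_smul]
  · simp [ex1, ex2, ew, ey, ez, Prod.fst_sum, Prod.snd_sum, -ite_smul]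
  · simp [ex1, ex2, ew, ey, ez, Prod.fst_sum, Prod.snd_sum, -ite_smul]
  · funext j
    simp [ex1, ex2, ew, ey, ez, Prod.fst_sum, Prod.snd_sum, Finset.sum_apply,
      sum_single_apply, -ite_smul]
  · funext j
    simp only [ex1, ex2, ew, ey, ez, Prod.mk_add_mk, Prod.smul_mk, smul_zero,
      Prod.fst_add, Prod.snd_add, Pi.add_apply, Prod.fst_sum, Prod.snd_sum,
      Finset.sum_apply, Pi.smul_apply, smul_eq_mul, Pi.zero_apply, add_zero,
      zero_add, sum_single_apply, Pi.single_apply, mul_ite, mul_one, mul_zero,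
      Finset.sum_ite_eq, Finset.mem_univ, if_true, Finset.sum_const_zero]
    by_cases hj : j = (⟨n-1, by omega⟩ : Fin n)
    · subst hj
      have h1 : ¬ ((n-1) + 1 < n) := by omega
      simp [h1]
    · have h2 : (j:ℕ) + 1 < n := by
        have h3 := j.isLt
        have h4 : (j:ℕ) ≠ n - 1 := fun h => hj (Fin.ext h)
        omega
      simp [h2, if_neg (fun h : j = (⟨n-1, by omega⟩ : Fin n) => hj h)]

/-- `vnlin` written out in coordinates. -/
lemma vnlin_eq (m n : ℕ) :
    vnlin m n = ((1:ℤ), (1:ℤ), (m:ℤ), (fun i : Fin n => (m:ℤ) * ((i:ℕ)+1) + 1),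
      fun i : Fin n => (m:ℤ) * ((i:ℕ)+1) + 1) := by
  refine Prod.ext ?_ (Prod.ext ?_ (Prod.ext ?_ (Prod.ext ?_ ?_)))
  · simp [ex1, ex2, ew, ey, ez, vnlin, Prod.fst_sum, Prod.snd_sum]
  · simp [ex1, ex2, ew, ey, ez, vnlin, Prod.fst_sum, Prod.snd_sum]
  · simp [ex1, ex2, ew, ey, ez, vnlin, Prod.fst_sum, Prod.snd_sum]
  · funext j
    simp [ex1, ex2, ew, ey, ez, vnlin, Prod.fst_sum, Prod.snd_sum,
      Finset.sum_apply, sum_single_apply]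
  · funext j
    simp [ex1, ex2, ew, ey, ez, vnlin, Prod.fst_sum, Prod.snd_sum,
      Finset.sum_apply, sum_single_apply]

/-- `v2` written out in coordinates. -/
lemma v2_eq (n : ℕ) : v2 n = ((1:ℤ), (0:ℤ), (0:ℤ), (fun _ => (1:ℤ)), 0) := by
  refine Prod.ext ?_ (Prod.ext ?_ (Prod.ext ?_ (Prod.ext ?_ ?_)))
  · simp [ex1, ey, v2, Prod.fst_sum, Prod.snd_sum]
  · simp [ex1, ey, v2, Prod.fst_sum, Prod.snd_sum]
  · simp [ex1, ey, v2, Prod.fst_sum, Prod.snd_sum]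
  · funext j
    have := sum_single_apply n (fun _ => 1) j
    simp only [one_mul] at this
    simp [ex1, ey, v2, Prod.fst_sum, Prod.snd_sum, Finset.sum_apply, this]
  · simp [ex1, ey, v2, Prod.fst_sum, Prod.snd_sum]

/-- The homomorphism whose kernel is `L`. -/
def phiV (m n : ℕ) (hn : 1 ≤ n) : LatticeV n →+ ZMod (m * n) where
  toFun v := ((v.2.2.2.2 ⟨n-1, by omega⟩ - v.2.1 : ℤ) : ZMod (m*n))
  map_zero' := by simp
  map_add' v w := by
    simp only [Prod.fst_add, Prod.snd_add, Pi.add_apply]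
    push_cast; ring

set_option maxHeartbeats 2000000 in
/-- Let `N = ℤ^{2n+3}` with `m, n ≥ 1`, and let `L` be the subgroup generated
by `e_{x₁}+e_{x₂}+e_{zₙ}`, `e_w`, the `e_{yᵢ}` for `1 ≤ i ≤ n`, the `e_{zᵢ}`
for `1 ≤ i ≤ n−1`, `e_{x₁} + ∑ e_{yᵢ}`, and
`e_{x₁}+e_{x₂}+m·e_w+∑ (mi+1)(e_{yᵢ}+e_{zᵢ})`. Then `[N : L] = mn`. -/
theorem second_sublattice_index (m n : ℕ) (hm : 1 ≤ m) (hn : 1 ≤ n)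
    (L : AddSubgroup (LatticeV n))
    (hL : L = AddSubgroup.closure
      ({ex1 n + ex2 n + ez n ⟨n - 1, by omega⟩, ew n}
        ∪ Set.range (ey n)
        ∪ {v | ∃ i : Fin n, (i : ℕ) + 1 < n ∧ v = ez n i}
        ∪ {v2 n, vnlin m n})) :
    L.index = m * n := by
  classical
  set lastI : Fin n := ⟨n-1, by omega⟩ with hlastI
  set S : Set (LatticeV n) :=
      ({ex1 n + ex2 n + ez n ⟨n - 1, by omega⟩, ew n}
        ∪ Set.range (ey n)
        ∪ {v | ∃ i : Fin n, (i : ℕ) + 1 < n ∧ v = ez n i}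
        ∪ {v2 n, vnlin m n}) with hS
  -- basic memberships in the closure
  have hg1 : ex1 n + ex2 n + ez n lastI ∈ AddSubgroup.closure S :=
    AddSubgroup.subset_closure (by left; left; left; exact Set.mem_insert _ _)
  have hew : ew n ∈ AddSubgroup.closure S :=
    AddSubgroup.subset_closure (by left; left; left; right; rfl)
  have hey : ∀ i : Fin n, ey n i ∈ AddSubgroup.closure S := fun i =>
    AddSubgroup.subset_closure (by left; left; right; exact ⟨i, rfl⟩)
  have hez : ∀ i : Fin n, (i:ℕ) + 1 < n → ez n i ∈ AddSubgroup.closure S := fun i hi =>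
    AddSubgroup.subset_closure (by left; right; exact ⟨i, hi, rfl⟩)
  have hv2 : v2 n ∈ AddSubgroup.closure S :=
    AddSubgroup.subset_closure (by right; exact Set.mem_insert _ _)
  have hvnlin : vnlin m n ∈ AddSubgroup.closure S :=
    AddSubgroup.subset_closure (by right; right; rfl)
  have hex1 : ex1 n ∈ AddSubgroup.closure S := by
    have h : ex1 n = v2 n - ∑ i : Fin n, ey n i := by rw [v2]; abel
    rw [h]
    exact sub_mem hv2 (sum_mem fun i _ => hey i)
  have hg1' : ex2 n + ez n lastI ∈ AddSubgroup.closure S := by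
    have h : ex2 n + ez n lastI = (ex1 n + ex2 n + ez n lastI) - ex1 n := by abel
    rw [h]
    exact sub_mem hg1 hex1
  have hzsum : ∀ c : Fin n → ℤ,
      (∑ i : Fin n, (if (i:ℕ)+1 < n then c i else (0:ℤ)) • ez n i)
        ∈ AddSubgroup.closure S := by
    intro c
    refine sum_mem fun i _ => ?_
    by_cases hi : (i:ℕ)+1 < n
    · exact zsmul_mem (hez i hi) _
    · simp only [hi, if_false, zero_smul]
      exact zero_mem _
  have hbig : ((m*n : ℕ):ℤ) • ez n lastI ∈ AddSubgroup.closure S := by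
    have hrep := reprV n hn ((1:ℤ), (1:ℤ), (m:ℤ),
      (fun i : Fin n => (m:ℤ) * ((i:ℕ)+1) + 1),
      fun i : Fin n => (m:ℤ) * ((i:ℕ)+1) + 1)
    simp only at hrep
    rw [← vnlin_eq] at hrep
    have hc : (m:ℤ) * ((((⟨n-1, by omega⟩ : Fin n) : ℕ) : ℤ) + 1) + 1 - 1
        = ((m*n:ℕ):ℤ) := by
      show (m:ℤ) * ((((n-1 : ℕ) : ℕ) : ℤ) + 1) + 1 - 1 = ((m*n:ℕ):ℤ)
      rw [Nat.cast_sub hn]; push_cast; ring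
    rw [hc] at hrep
    have hmem : (1:ℤ) • ex1 n
        + (1:ℤ) • (ex2 n + ez n ⟨n-1, by omega⟩)
        + (m:ℤ) • ew n
        + (∑ i : Fin n, ((m:ℤ) * ((i:ℕ)+1) + 1) • ey n i)
        + (∑ i : Fin n, (if (i:ℕ)+1 < n then (m:ℤ) * ((i:ℕ)+1) + 1 else (0:ℤ)) • ez n i)
        ∈ AddSubgroup.closure S := by
      refine add_mem (add_mem (add_mem (add_mem (zsmul_mem hex1 _)
        (zsmul_mem hg1' _)) (zsmul_mem hew _))
        (sum_mem fun i _ => zsmul_mem (hey i) _)) (hzsum _)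
    have hsub := sub_mem hvnlin hmem
    have heq : ((m*n : ℕ):ℤ) • ez n lastI
        = vnlin m n - ((1:ℤ) • ex1 n
        + (1:ℤ) • (ex2 n + ez n ⟨n-1, by omega⟩)
        + (m:ℤ) • ew n
        + (∑ i : Fin n, ((m:ℤ) * ((i:ℕ)+1) + 1) • ey n i)
        + (∑ i : Fin n, (if (i:ℕ)+1 < n then (m:ℤ) * ((i:ℕ)+1) + 1 else (0:ℤ)) • ez n i)) := by
      rw [hrep]; abel
    rw [heq]
    exact hsub
  -- the closure is exactly the kernel of phiV
  have hker : AddSubgroup.closure S = (phiV m n hn).ker := by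
    apply le_antisymm
    · rw [AddSubgroup.closure_le]
      rintro x hx
      simp only [hS, Set.mem_union, Set.mem_insert_iff, Set.mem_singleton_iff,
        Set.mem_setOf_eq, Set.mem_range] at hx
      simp only [SetLike.mem_coe, AddMonoidHom.mem_ker]
      rcases hx with (((rfl | rfl) | ⟨i, rfl⟩) | ⟨i, hi, rfl⟩) | (rfl | rfl)
      · simp [phiV, ex1, ex2, ez, Pi.single_eq_same]
      · simp [phiV, ew]
      · simp [phiV, ey]
      · have hne : (⟨n-1, by omega⟩ : Fin n) ≠ i := by
          intro h
          have : (n:ℕ) - 1 = (i:ℕ) := congrArg Fin.val h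
          omega
        simp [phiV, ez, Pi.single_eq_of_ne hne]
      · rw [v2_eq]; simp [phiV]
      · rw [vnlin_eq]
        show (((m:ℤ) * (((n:ℕ) - 1 : ℕ) + 1) + 1 - 1 : ℤ) : ZMod (m*n)) = 0
        have h : ((m:ℤ) * (((n:ℕ) - 1 : ℕ) + 1) + 1 - 1 : ℤ) = ((m*n:ℕ):ℤ) := by
          rw [Nat.cast_sub hn]; push_cast; ring
        rw [h]
        exact_mod_cast ZMod.natCast_self (m*n)
    · intro v hv
      rw [AddMonoidHom.mem_ker] at hv
      have hv' : ((v.2.2.2.2 (⟨n-1, by omega⟩ : Fin n) - v.2.1 : ℤ) : ZMod (m*n)) = 0 := hv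
      have hdvd : ((m*n:ℕ):ℤ) ∣ v.2.2.2.2 (⟨n-1, by omega⟩ : Fin n) - v.2.1 := by
        exact_mod_cast (ZMod.intCast_zmod_eq_zero_iff_dvd _ _).mp hv'
      obtain ⟨k, hk⟩ := hdvd
      rw [reprV n hn v]
      refine add_mem (add_mem (add_mem (add_mem (add_mem (zsmul_mem hex1 _)
        (zsmul_mem hg1' _)) (zsmul_mem hew _))
        (sum_mem fun i _ => zsmul_mem (hey i) _)) (hzsum _)) ?_
      rw [hk, mul_comm, ← smul_smul]
      exact zsmul_mem hbig k
  -- surjectivity of phiV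
  have hsurj : Function.Surjective (phiV m n hn) := by
    intro c
    obtain ⟨a, rfl⟩ := ZMod.intCast_surjective c
    exact ⟨(0, 0, 0, 0, Pi.single ⟨n-1, by omega⟩ a),
      by simp [phiV, Pi.single_eq_same]⟩
  rw [hL, hker, AddSubgroup.index_ker,
    AddMonoidHom.range_eq_top_of_surjective _ hsurj]
  rw [Nat.card_congr AddSubgroup.topEquiv.toEquiv, Nat.card_zmod]
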